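/- Let A be a two-sided skew brace and let Z be the center of the multiplicative group A_⊙. Then I = (A*Z) ⊕ (Z*A), the subgroup of A_⊕ generated by A*Z and Z*A, is an ideal of A, and the group I_⊕ = (I,⊕) is abelian. -/

import Mathlib

/-- A subset `I` of a skew brace `A` is an ideal if it is (the carrier of) a normal subgroup
of both the additive group and the multiplicative group of `A`, and `λ_a(I) = I` for all
`a ∈ A`, where `λ_a x = -a + a * x`. -/
def IsIdeal (A : Type*) [AddGroup A] [Group A] (I : Set A) : Prop :=
  (∃ N : AddSubgroup A, N.Normal ∧ (N : Set A) = I) ∧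
  (∃ H : Subgroup A, H.Normal ∧ (H : Set A) = I) ∧
  (∀ a : A, (fun x => -a + a * x) '' I = I)

/-- The star operation of a skew brace: `a * b = ⊖a ⊕ (a ⊙ b) ⊖ b`. -/
def sbStar (A : Type*) [AddGroup A] [Group A] (a b : A) : A := -a + a * b + -b

section SkewAux

variable {A : Type*} [AddGroup A] [Group A]

private lemma sb_mul_zero (hl : ∀ a b c : A, a * (b + c) = a * b + -a + a * c) (a : A) :
    a * (0 : A) = a := by
  have h := hl a 0 0
  rw [add_zero] at h
  have h2 : a * 0 + (0 : A) = a * 0 + (-a + a * 0) := by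
    rw [add_zero, ← add_assoc]; exact h
  have h3 := add_left_cancel h2
  exact (neg_add_eq_zero.mp h3.symm).symm

private lemma sb_one_eq_zero (hl : ∀ a b c : A, a * (b + c) = a * b + -a + a * c) :
    (1 : A) = 0 := by
  have h := sb_mul_zero hl 1
  rw [one_mul] at h
  exact h.symm

private lemma sb_zero_mul (hl : ∀ a b c : A, a * (b + c) = a * b + -a + a * c) (a : A) :
    (0 : A) * a = a := by
  rw [← sb_one_eq_zero hl, one_mul]

private lemma sb_mul_neg (hl : ∀ a b c : A, a * (b + c) = a * b + -a + a * c) (a b : A) :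
    a * (-b) = a + -(a * b) + a := by
  have h := hl a b (-b)
  rw [add_neg_cancel, sb_mul_zero hl] at h
  have hR : (a * b + -a) + (a + -(a * b) + a) = a := by
    simp only [add_assoc, neg_add_cancel_left, add_neg_cancel_left]
  have hL : (a * b + -a) + a * (-b) = a := h.symm
  exact add_left_cancel (hL.trans hR.symm)

private lemma sb_neg_mul (hl : ∀ a b c : A, a * (b + c) = a * b + -a + a * c)
    (hr : ∀ a b c : A, (a + b) * c = a * c + -c + b * c) (a b : A) :
    (-a) * b = b + -(a * b) + b := by
  have h := hr a (-a) b
  rw [add_neg_cancel, sb_zero_mul hl] at h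
  have hR : (a * b + -b) + (b + -(a * b) + b) = b := by
    simp only [add_assoc, neg_add_cancel_left, add_neg_cancel_left]
  have hL : (a * b + -b) + (-a) * b = b := h.symm
  exact add_left_cancel (hL.trans hR.symm)

private lemma lam_add (hl : ∀ a b c : A, a * (b + c) = a * b + -a + a * c) (a b c : A) :
    -a + a * (b + c) = (-a + a * b) + (-a + a * c) := by
  rw [hl]; simp only [add_assoc]

private lemma lam_neg (hl : ∀ a b c : A, a * (b + c) = a * b + -a + a * c) (a b : A) :
    -a + a * (-b) = -(-a + a * b) := by
  rw [sb_mul_neg hl]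
  simp only [neg_add_rev, neg_neg, add_assoc, neg_add_cancel_left]

private lemma lam_comp (hl : ∀ a b c : A, a * (b + c) = a * b + -a + a * c) (a b u : A) :
    -a + a * (-b + b * u) = -(a * b) + (a * b) * u := by
  rw [lam_add hl a (-b) (b * u), lam_neg hl a b, ← mul_assoc]
  simp only [neg_add_rev, neg_neg, add_assoc, add_neg_cancel_left]

private lemma lam_one (hl : ∀ a b c : A, a * (b + c) = a * b + -a + a * c) (u : A) :
    -(1 : A) + 1 * u = u := by
  rw [one_mul, sb_one_eq_zero hl, neg_zero, zero_add]

private lemma lam_lam_inv (hl : ∀ a b c : A, a * (b + c) = a * b + -a + a * c) (a u : A) :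
    -a + a * (-a⁻¹ + a⁻¹ * u) = u := by
  rw [lam_comp hl a a⁻¹ u, mul_inv_cancel]
  exact lam_one hl u

private lemma crule (hr : ∀ a b c : A, (a + b) * c = a * c + -c + b * c) (a b c : A) :
    sbStar A (a + b) c = -b + sbStar A a c + b + sbStar A b c := by
  simp only [sbStar, hr, neg_add_rev, add_assoc, add_neg_cancel_left, neg_add_cancel_left]

private lemma lrule (hl : ∀ a b c : A, a * (b + c) = a * b + -a + a * c) (a b c : A) :
    sbStar A a (b + c) = sbStar A a b + b + sbStar A a c + -b := by
  simp only [sbStar, hl, neg_add_rev, add_assoc, add_neg_cancel_left, neg_add_cancel_left]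

private lemma star_zero_left (hl : ∀ a b c : A, a * (b + c) = a * b + -a + a * c) (b : A) :
    sbStar A 0 b = 0 := by
  simp only [sbStar, sb_zero_mul hl, neg_zero, zero_add, add_neg_cancel]

private lemma comm0 (hl : ∀ a b c : A, a * (b + c) = a * b + -a + a * c)
    (hr : ∀ a b c : A, (a + b) * c = a * c + -c + b * c) (a d b c : A) :
    (-a + a * d + -d) + (-c + b * c + -b) = (-c + b * c + -b) + (-a + a * d + -d) := by
  have h1 : (a + b) * (c + d)
      = a * c + (-a + (a * d + (-d + (-c + (b * c + (-b + b * d)))))) := by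
    rw [hr, hl, hl]
    simp only [neg_add_rev, add_assoc]
  have h2 : (a + b) * (c + d)
      = a * c + (-c + (b * c + (-b + (-a + (a * d + (-d + b * d)))))) := by
    rw [hl, hr, hr]
    simp only [neg_add_rev, add_assoc]
  have h3 := add_left_cancel (h1.symm.trans h2)
  have h4 : ((-a + a * d + -d) + (-c + b * c + -b)) + b * d
      = ((-c + b * c + -b) + (-a + a * d + -d)) + b * d := by
    simpa only [add_assoc] using h3
  exact add_right_cancel h4

private lemma mul_eq_add_star (u w : A) : u * w = u + (sbStar A u w + w) := by
  simp only [sbStar, add_assoc, neg_add_cancel, add_zero, add_neg_cancel_left]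

private lemma lam_star_left (hl : ∀ a b c : A, a * (b + c) = a * b + -a + a * c) (a b c : A) :
    -a + a * (sbStar A b c) = sbStar A (a * b) c + -(sbStar A a c) := by
  simp only [sbStar]
  rw [lam_add hl a (-b + b * c) (-c), lam_add hl a (-b) (b * c), lam_neg hl a b,
    lam_neg hl a c, ← mul_assoc]
  simp only [neg_add_rev, neg_neg, add_assoc, add_neg_cancel_left, neg_add_cancel_left]

private lemma lam_star_right (hl : ∀ a b c : A, a * (b + c) = a * b + -a + a * c)
    (a x b : A) (h1 : a * x = x * a) (h2 : a * (x * b) = x * (a * b)) :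
    -a + a * (sbStar A x b) = -a + (-(sbStar A x a) + sbStar A x (a * b)) + a := by
  simp only [sbStar]
  rw [lam_add hl a (-x + x * b) (-b), lam_add hl a (-x) (x * b), lam_neg hl a x,
    lam_neg hl a b, h2, h1]
  simp only [neg_add_rev, neg_neg, add_assoc, add_neg_cancel_left, neg_add_cancel_left]

private lemma starIA_base1 (hl : ∀ a b c : A, a * (b + c) = a * b + -a + a * c)
    (hr : ∀ a b c : A, (a + b) * c = a * c + -c + b * c) (p x b : A)
    (hbx : x * b = b * x) :
    sbStar A (sbStar A p x) b =
      -(sbStar A p x) + (b + sbStar A (p * b) x + -b) + (b + x + -b + -x)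
        + (x + -(sbStar A x b) + -x) := by
  have e : (sbStar A p x) * b = (-p) * b + -b + (p * x) * b + -b + (-x) * b := by
    show (-p + p * x + -x) * b = _
    rw [hr, hr]
  have hpxb : p * (x * b) = (p * b) * x := by rw [hbx, ← mul_assoc]
  show -(sbStar A p x) + (sbStar A p x) * b + -b = _
  rw [e, sb_neg_mul hl hr p b, sb_neg_mul hl hr x b, mul_assoc p x b, hpxb]
  simp only [sbStar, neg_add_rev, neg_neg, add_assoc, add_neg_cancel_left,
    neg_add_cancel_left, add_neg_cancel, add_zero]

private lemma starIA_base2 (hl : ∀ a b c : A, a * (b + c) = a * b + -a + a * c)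
    (hr : ∀ a b c : A, (a + b) * c = a * c + -c + b * c) (x p b : A) :
    sbStar A (sbStar A x p) b =
      -(sbStar A x p) + -(sbStar A x b) + sbStar A x (p * b) := by
  have e : (sbStar A x p) * b = (-x) * b + -b + (x * p) * b + -b + (-p) * b := by
    show (-x + x * p + -p) * b = _
    rw [hr, hr]
  show -(sbStar A x p) + (sbStar A x p) * b + -b = _
  rw [e, sb_neg_mul hl hr x b, sb_neg_mul hl hr p b, mul_assoc x p b]
  simp only [sbStar, neg_add_rev, neg_neg, add_assoc, add_neg_cancel_left,
    neg_add_cancel_left, add_neg_cancel, add_zero]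

end SkewAux

/-- Let `A` be a two-sided skew brace and `Z` the center of its multiplicative group.
Then `I = (A * Z) ⊕ (Z * A)`, the additive subgroup generated by `A * Z` and `Z * A`,
is an ideal of `A` whose additive group is abelian. -/
theorem two_sided_skew_brace_center_star_ideal_abelian
    (A : Type*) [AddGroup A] [Group A]
    (hl : ∀ a b c : A, a * (b + c) = a * b + -a + a * c)
    (hr : ∀ a b c : A, (a + b) * c = a * c + -c + b * c) :
    IsIdeal A (AddSubgroup.closure
        ({z : A | ∃ a : A, ∃ x ∈ Subgroup.center A, z = sbStar A a x} ∪
         {z : A | ∃ x ∈ Subgroup.center A, ∃ a : A, z = sbStar A x a}) : Set A) ∧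
      ∀ u ∈ AddSubgroup.closure
        ({z : A | ∃ a : A, ∃ x ∈ Subgroup.center A, z = sbStar A a x} ∪
         {z : A | ∃ x ∈ Subgroup.center A, ∃ a : A, z = sbStar A x a}),
        ∀ v ∈ AddSubgroup.closure
        ({z : A | ∃ a : A, ∃ x ∈ Subgroup.center A, z = sbStar A a x} ∪
         {z : A | ∃ x ∈ Subgroup.center A, ∃ a : A, z = sbStar A x a}),
        u + v = v + u := by
  set S : Set A :=
    ({z : A | ∃ a : A, ∃ x ∈ Subgroup.center A, z = sbStar A a x} ∪
     {z : A | ∃ x ∈ Subgroup.center A, ∃ a : A, z = sbStar A x a}) with hSdef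
  set N : AddSubgroup A := AddSubgroup.closure S with hNdef
  have hmem1 : ∀ a x : A, x ∈ Subgroup.center A → sbStar A a x ∈ S := by
    intro a x hx; rw [hSdef]; exact Or.inl ⟨a, x, hx, rfl⟩
  have hmem2 : ∀ x a : A, x ∈ Subgroup.center A → sbStar A x a ∈ S := by
    intro x a hx; rw [hSdef]; exact Or.inr ⟨x, hx, a, rfl⟩
  have hgen1 : ∀ a x : A, x ∈ Subgroup.center A → sbStar A a x ∈ N :=
    fun a x hx => AddSubgroup.subset_closure (hmem1 a x hx)
  have hgen2 : ∀ x a : A, x ∈ Subgroup.center A → sbStar A x a ∈ N :=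
    fun x a hx => AddSubgroup.subset_closure (hmem2 x a hx)
  -- conjugates of generators lie in N
  have hconjS : ∀ g s : A, s ∈ S → g + s + -g ∈ N := by
    intro g s hs
    rw [hSdef] at hs
    rcases hs with ⟨a, x, hx, rfl⟩ | ⟨x, hx, a, rfl⟩
    · have h := crule hr a (-g) x
      rw [neg_neg] at h
      have h2 : g + sbStar A a x + -g = sbStar A (a + -g) x + -(sbStar A (-g) x) := by
        rw [h]; simp only [add_assoc, add_neg_cancel, add_zero]
      rw [h2]
      exact add_mem (hgen1 _ _ hx) (neg_mem (hgen1 _ _ hx))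
    · have h := lrule hl x g a
      have h2 : g + sbStar A x a + -g = -(sbStar A x g) + sbStar A x (g + a) := by
        rw [h]; simp only [add_assoc, neg_add_cancel_left]
      rw [h2]
      exact add_mem (neg_mem (hgen2 _ _ hx)) (hgen2 _ _ hx)
  -- N is a normal additive subgroup
  have hN : N.Normal := by
    constructor
    intro n hn g
    rw [hNdef] at hn
    induction hn using AddSubgroup.closure_induction with
    | mem s hs => exact hconjS g s hs
    | zero => simpa using zero_mem N
    | add u v hu hv pu pv =>
      have h2 : g + (u + v) + -g = (g + u + -g) + (g + v + -g) := by
        simp only [add_assoc, neg_add_cancel_left]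
      rw [h2]; exact add_mem pu pv
    | neg u hu pu =>
      have h2 : g + (-u) + -g = -(g + u + -g) := by
        simp only [neg_add_rev, neg_neg, add_assoc]
      rw [h2]; exact neg_mem pu
  haveI := hN
  -- quotient computations
  have hq1 : ∀ a x : A, x ∈ Subgroup.center A →
      ((a * x : A) : A ⧸ N) = (a : A ⧸ N) + (x : A ⧸ N) := by
    intro a x hx
    have h0 : ((sbStar A a x : A) : A ⧸ N) = 0 :=
      (QuotientAddGroup.eq_zero_iff _).mpr (hgen1 a x hx)
    simp only [sbStar, QuotientAddGroup.mk_add, QuotientAddGroup.mk_neg] at h0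
    have h1 := add_neg_eq_zero.mp h0
    have h2 := congrArg (fun t => (a : A ⧸ N) + t) h1
    simpa only [add_neg_cancel_left] using h2
  have hq2 : ∀ x a : A, x ∈ Subgroup.center A →
      ((x * a : A) : A ⧸ N) = (x : A ⧸ N) + (a : A ⧸ N) := by
    intro x a hx
    have h0 : ((sbStar A x a : A) : A ⧸ N) = 0 :=
      (QuotientAddGroup.eq_zero_iff _).mpr (hgen2 x a hx)
    simp only [sbStar, QuotientAddGroup.mk_add, QuotientAddGroup.mk_neg] at h0
    have h1 := add_neg_eq_zero.mp h0
    have h2 := congrArg (fun t => (x : A ⧸ N) + t) h1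
    simpa only [add_neg_cancel_left] using h2
  have hqc : ∀ x : A, x ∈ Subgroup.center A → ∀ q : A ⧸ N,
      (x : A ⧸ N) + q = q + (x : A ⧸ N) := by
    intro x hx q
    refine QuotientAddGroup.induction_on q ?_
    intro c
    calc (x : A ⧸ N) + (c : A ⧸ N) = ((x * c : A) : A ⧸ N) := (hq2 x c hx).symm
    _ = ((c * x : A) : A ⧸ N) := by rw [Subgroup.mem_center_iff.mp hx c]
    _ = (c : A ⧸ N) + (x : A ⧸ N) := hq1 c x hx
  -- additive commutators with central elements lie in N
  have hcommZ : ∀ x : A, x ∈ Subgroup.center A → ∀ b : A, b + x + -b + -x ∈ N := by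
    intro x hx b
    refine (QuotientAddGroup.eq_zero_iff _).mp ?_
    show ((b + x + -b + -x : A) : A ⧸ N) = 0
    simp only [QuotientAddGroup.mk_add, QuotientAddGroup.mk_neg]
    rw [add_assoc (b : A ⧸ N) (x : A ⧸ N) (-(b : A ⧸ N)), hqc x hx (-(b : A ⧸ N)),
      add_neg_cancel_left, add_neg_cancel]
  -- lambda stability
  have hlam : ∀ a u : A, u ∈ N → -a + a * u ∈ N := by
    intro a u hu
    rw [hNdef] at hu
    induction hu using AddSubgroup.closure_induction with
    | mem s hs =>
      rw [hSdef] at hs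
      rcases hs with ⟨b, x, hx, rfl⟩ | ⟨x, hx, b, rfl⟩
      · rw [lam_star_left hl a b x]
        exact add_mem (hgen1 _ _ hx) (neg_mem (hgen1 _ _ hx))
      · have hcen := Subgroup.mem_center_iff.mp hx
        have h1 : a * x = x * a := hcen a
        have h2 : a * (x * b) = x * (a * b) := by
          rw [← mul_assoc, h1, mul_assoc]
        rw [lam_star_right hl a x b h1 h2]
        have hm : -(sbStar A x a) + sbStar A x (a * b) ∈ N :=
          add_mem (neg_mem (hgen2 _ _ hx)) (hgen2 _ _ hx)
        have h3 := hN.conj_mem _ hm (-a)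
        rwa [neg_neg] at h3
    | zero =>
      have h2 : -a + a * (0 : A) = 0 := by rw [sb_mul_zero hl, neg_add_cancel]
      rw [h2]; exact zero_mem N
    | add u v hu hv pu pv =>
      rw [lam_add hl a u v]; exact add_mem pu pv
    | neg u hu pu =>
      rw [lam_neg hl a u]; exact neg_mem pu
  -- the star of an element of N with anything is in N
  have hstarI : ∀ b u : A, u ∈ N → sbStar A u b ∈ N := by
    intro b u hu
    rw [hNdef] at hu
    induction hu using AddSubgroup.closure_induction with
    | mem s hs =>
      rw [hSdef] at hs
      rcases hs with ⟨p, x, hx, rfl⟩ | ⟨x, hx, p, rfl⟩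
      · have hbx : x * b = b * x := (Subgroup.mem_center_iff.mp hx b).symm
        rw [starIA_base1 hl hr p x b hbx]
        have m1 : -(sbStar A p x) ∈ N := neg_mem (hgen1 _ _ hx)
        have m2 : b + sbStar A (p * b) x + -b ∈ N := hN.conj_mem _ (hgen1 _ _ hx) b
        have m3 : b + x + -b + -x ∈ N := hcommZ x hx b
        have m4 : x + -(sbStar A x b) + -x ∈ N := by
          have h := hN.conj_mem _ (neg_mem (hgen2 x b hx)) x
          exact h
        exact add_mem (add_mem (add_mem m1 m2) m3) m4
      · rw [starIA_base2 hl hr x p b]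
        exact add_mem (add_mem (neg_mem (hgen2 _ _ hx)) (neg_mem (hgen2 _ _ hx)))
          (hgen2 _ _ hx)
    | zero =>
      rw [star_zero_left hl b]; exact zero_mem N
    | add u v hu hv pu pv =>
      rw [crule hr u v b]
      refine add_mem ?_ pv
      have h := hN.conj_mem _ pu (-v)
      rwa [neg_neg] at h
    | neg u hu pu =>
      have h := crule hr u (-u) b
      rw [add_neg_cancel, star_zero_left hl, neg_neg] at h
      have h2 : sbStar A (-u) b = -(u + sbStar A u b + -u) :=
        eq_neg_of_add_eq_zero_right h.symm
      rw [h2]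
      exact neg_mem (hN.conj_mem _ pu u)
  -- multiplicative structure
  have hmul_mem : ∀ u v : A, u ∈ N → v ∈ N → u * v ∈ N := by
    intro u v hu hv
    have e : u * v = u + (-u + u * v) := by rw [add_neg_cancel_left]
    rw [e]; exact add_mem hu (hlam u v hv)
  have hone_mem : (1 : A) ∈ N := by
    rw [sb_one_eq_zero hl]; exact zero_mem N
  have hinv_mem : ∀ u : A, u ∈ N → u⁻¹ ∈ N := by
    intro u hu
    have h := lam_comp hl u⁻¹ u u⁻¹
    rw [inv_mul_cancel, mul_inv_cancel, sb_one_eq_zero hl, add_zero, neg_zero, zero_add,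
      sb_zero_mul hl] at h
    rw [← h]
    exact hlam u⁻¹ (-u) (neg_mem hu)
  let H : Subgroup A :=
    { carrier := (N : Set A)
      one_mem' := hone_mem
      mul_mem' := fun {a b} ha hb => hmul_mem a b ha hb
      inv_mem' := fun {a} ha => hinv_mem a ha }
  have hHnormal : H.Normal := by
    constructor
    intro n hn g
    have hn' : n ∈ N := hn
    have e : g * n * g⁻¹ = g + ((-g + g * n) + (-g + g * sbStar A n g⁻¹)) + -g := by
      rw [mul_assoc, mul_eq_add_star n g⁻¹, hl g n (sbStar A n g⁻¹ + g⁻¹),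
        hl g (sbStar A n g⁻¹) g⁻¹, mul_inv_cancel, sb_one_eq_zero hl, add_zero]
      simp only [add_assoc, neg_add_cancel_left, add_neg_cancel_left]
    show g * n * g⁻¹ ∈ N
    rw [e]
    exact hN.conj_mem _ (add_mem (hlam g n hn') (hlam g _ (hstarI g⁻¹ n hn'))) g
  -- commutation of stars
  have hSstar_t : ∀ p q v : A, v ∈ S → sbStar A p q + v = v + sbStar A p q := by
    intro p q v hv
    rw [hSdef] at hv
    rcases hv with ⟨b, x, hx, rfl⟩ | ⟨x, hx, b, rfl⟩
    · have hbx : b * x = x * b := Subgroup.mem_center_iff.mp hx b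
      have h := comm0 hl hr p q x b
      show sbStar A p q + sbStar A b x = sbStar A b x + sbStar A p q
      simp only [sbStar]
      rw [hbx]
      exact h
    · have hxb : x * b = b * x := (Subgroup.mem_center_iff.mp hx b).symm
      have h := comm0 hl hr p q b x
      show sbStar A p q + sbStar A x b = sbStar A x b + sbStar A p q
      simp only [sbStar]
      rw [hxb]
      exact h
  have hcomm1 : ∀ v : A, v ∈ S → ∀ u : A, u ∈ N → u + v = v + u := by
    intro v hv u hu
    rw [hNdef] at hu
    induction hu using AddSubgroup.closure_induction with
    | mem s hs =>
      have hs' := hs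
      rw [hSdef] at hs'
      rcases hs' with ⟨p, x, hx, heq⟩ | ⟨x, hx, p, heq⟩
      · rw [heq]; exact hSstar_t _ _ v hv
      · rw [heq]; exact hSstar_t _ _ v hv
    | zero => rw [zero_add, add_zero]
    | add u1 u2 h1 h2 p1 p2 =>
      rw [add_assoc, p2, ← add_assoc, p1, add_assoc]
    | neg u1 h1 p1 =>
      have h2 := congrArg (fun t => -u1 + t + -u1) p1
      simp only [neg_add_cancel_left, add_assoc, add_neg_cancel, add_zero] at h2
      exact h2.symm
  refine ⟨⟨⟨N, hN, rfl⟩, ⟨H, hHnormal, rfl⟩, ?_⟩, ?_⟩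
  · -- lambda invariance of the carrier
    intro a
    ext u
    constructor
    · rintro ⟨w, hw, rfl⟩
      exact hlam a w hw
    · intro hu
      exact ⟨-a⁻¹ + a⁻¹ * u, hlam a⁻¹ u hu, lam_lam_inv hl a u⟩
  · -- the additive group of the ideal is abelian
    intro u hu v hv
    rw [hNdef] at hv
    induction hv using AddSubgroup.closure_induction with
    | mem s hs => exact hcomm1 s hs u hu
    | zero => rw [add_zero, zero_add]
    | add v1 v2 h1 h2 p1 p2 =>
      rw [← add_assoc, p1, add_assoc, p2, ← add_assoc]
    | neg v1 h1 p1 =>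
      have h2 := congrArg (fun t => -v1 + t + -v1) p1
      simp only [neg_add_cancel_left, add_assoc, add_neg_cancel, add_zero] at h2
      exact h2.symm
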